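/- For every integer k ≥ 1, the 2k-th Bernoulli number satisfies B_{2k} = Σ_{m=1}^{k} (-1)^(m-1) · (m! · (m-1)! / (2m+1)!) · R(k,m), as an identity of rational numbers. -/

import Mathlib

/-- `R k m = ∑_{j=0}^m (-1)^j C(2m, j) (m-j)^{2k}`, the sequence A304330. -/
def R (k m : ℕ) : ℤ :=
  ∑ j ∈ Finset.range (m + 1),
    (-1 : ℤ) ^ j * ((2 * m).choose j : ℤ) * (((m - j) ^ (2 * k) : ℕ) : ℤ)

section AuxiliaryDevelopment

open Finset Polynomial

/-- full central difference sum -/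
def S (k m : ℕ) : ℤ :=
  ∑ j ∈ Finset.range (2 * m + 1),
    (-1 : ℤ) ^ j * ((2 * m).choose j : ℤ) * ((m : ℤ) - j) ^ (2 * k)

lemma S_eq_two_mul_R (k m : ℕ) (hk : 1 ≤ k) : S k m = 2 * R k m := by
  have hsplit : S k m = (∑ j ∈ range (m + 1),
      (-1 : ℤ) ^ j * ((2 * m).choose j : ℤ) * ((m : ℤ) - j) ^ (2 * k))
      + ∑ j ∈ Ico (m + 1) (2 * m + 1),
      (-1 : ℤ) ^ j * ((2 * m).choose j : ℤ) * ((m : ℤ) - j) ^ (2 * k) := by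
    rw [S, range_eq_Ico, ← Finset.sum_Ico_consecutive _ (by omega : 0 ≤ m + 1) (by omega : m + 1 ≤ 2 * m + 1), ← range_eq_Ico]
  have h2 : ∑ j ∈ Ico (m + 1) (2 * m + 1),
      (-1 : ℤ) ^ j * ((2 * m).choose j : ℤ) * ((m : ℤ) - j) ^ (2 * k)
      = ∑ i ∈ range m, (-1 : ℤ) ^ i * ((2 * m).choose i : ℤ) * ((m : ℤ) - i) ^ (2 * k) := by
    refine Finset.sum_nbij' (fun j => 2 * m - j) (fun i => 2 * m - i) ?_ ?_ ?_ ?_ ?_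
    · intro a ha; simp only [mem_Ico] at ha; simp only [mem_range]; omega
    · intro a ha; simp only [mem_range] at ha; simp only [mem_Ico]; omega
    · intro a ha; simp only [mem_Ico] at ha; omega
    · intro a ha; simp only [mem_range] at ha; omega
    · intro j hj
      simp only [mem_Ico] at hj
      have h1 : j ≤ 2 * m := by omega
      have hc : (2 * m).choose (2 * m - j) = (2 * m).choose j := Nat.choose_symm h1
      have hsign : (-1 : ℤ) ^ (2 * m - j) = (-1 : ℤ) ^ j := by
        have := pow_add (-1 : ℤ) (2 * m - j) j
        rw [Nat.sub_add_cancel h1] at this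
        have h2m : (-1 : ℤ) ^ (2 * m) = 1 := by
          rw [pow_mul]; norm_num
        have hsq : ((-1 : ℤ) ^ j) * ((-1 : ℤ) ^ j) = 1 := by
          rw [← pow_add, ← two_mul, pow_mul]; norm_num
        calc (-1 : ℤ) ^ (2 * m - j) = (-1 : ℤ) ^ (2*m-j) * ((-1:ℤ)^j * (-1:ℤ)^j) := by rw [hsq, mul_one]
          _ = ((-1:ℤ)^(2*m)) * (-1:ℤ)^j := by rw [← mul_assoc, ← this]
          _ = (-1:ℤ)^j := by rw [h2m, one_mul]
      have hbase : ((m : ℤ) - (2 * m - j : ℕ)) = -((m : ℤ) - j) := by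
        push_cast [h1]; ring
      rw [hc, hsign, hbase, Even.neg_pow (even_two_mul k)]
  have h3 : ∑ j ∈ range (m + 1),
      (-1 : ℤ) ^ j * ((2 * m).choose j : ℤ) * ((m : ℤ) - j) ^ (2 * k) = R k m := by
    rw [R]
    refine Finset.sum_congr rfl fun j hj => ?_
    simp only [mem_range] at hj
    have hjm : j ≤ m := by omega
    congr 1
    push_cast [hjm]
    ring
  have h4 : ∑ i ∈ range m, (-1 : ℤ) ^ i * ((2 * m).choose i : ℤ) * ((m : ℤ) - i) ^ (2 * k)
      = R k m := by
    rw [← h3, Finset.sum_range_succ]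
    have : ((m : ℤ) - m) ^ (2 * k) = 0 := by
      simp only [sub_self]
      exact zero_pow (by omega)
    rw [this, mul_zero, add_zero]
  rw [hsplit, h2, h3, h4]; ring

lemma choose_key (m j : ℕ) (hj : j + 1 ≤ 2 * m + 2) :
    (j + 1) * ((2 * m + 2) - (j + 1)) * Nat.choose (2 * m + 2) (j + 1)
      = (2 * m + 2) * ((2 * m + 1) * Nat.choose (2 * m) j) := by
  have h1 : (2 * m + 2) * Nat.choose (2 * m + 1) j = Nat.choose (2 * m + 2) (j + 1) * (j + 1) := by
    have := Nat.add_one_mul_choose_eq (2 * m + 1) j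
    simpa [Nat.succ_eq_add_one] using this
  have h2 : Nat.choose (2 * m + 1) (j + 1) * (j + 1)
      = Nat.choose (2 * m + 1) j * ((2 * m + 1) - j) := Nat.choose_succ_right_eq (2 * m + 1) j
  have h3 : (2 * m + 1) * Nat.choose (2 * m) j = Nat.choose (2 * m + 1) (j + 1) * (j + 1) := by
    have := Nat.add_one_mul_choose_eq (2 * m) j
    simpa [Nat.succ_eq_add_one] using this
  have h4 : (2 * m + 2) - (j + 1) = (2 * m + 1) - j := by omega
  calc (j + 1) * ((2 * m + 2) - (j + 1)) * Nat.choose (2 * m + 2) (j + 1)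
      = ((2 * m + 2) - (j + 1)) * (Nat.choose (2 * m + 2) (j + 1) * (j + 1)) := by ring
    _ = ((2 * m + 1) - j) * ((2 * m + 2) * Nat.choose (2 * m + 1) j) := by rw [h4, h1]
    _ = (2 * m + 2) * (Nat.choose (2 * m + 1) j * ((2 * m + 1) - j)) := by ring
    _ = (2 * m + 2) * (Nat.choose (2 * m + 1) (j + 1) * (j + 1)) := by rw [h2]
    _ = (2 * m + 2) * ((2 * m + 1) * Nat.choose (2 * m) j) := by rw [← h3]

lemma S_rec (k m : ℕ) :
    S (k + 1) (m + 1)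
      = (2 * (m : ℤ) + 2) * (2 * (m : ℤ) + 1) * S k m + ((m : ℤ) + 1) ^ 2 * S k (m + 1) := by
  have hdiff : S (k + 1) (m + 1) - ((m : ℤ) + 1) ^ 2 * S k (m + 1)
      = ∑ j ∈ range (2 * (m + 1) + 1),
        (-1 : ℤ) ^ j * ((2 * (m + 1)).choose j : ℤ) * (((m : ℤ) + 1) - j) ^ (2 * k)
          * ((((m : ℤ) + 1) - j) ^ 2 - ((m : ℤ) + 1) ^ 2) := by
    rw [S, S, Finset.mul_sum, ← Finset.sum_sub_distrib]
    refine Finset.sum_congr rfl fun j hj => ?_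
    push_cast
    ring
  have hstep : ∑ j ∈ range (2 * (m + 1) + 1),
        (-1 : ℤ) ^ j * ((2 * (m + 1)).choose j : ℤ) * (((m : ℤ) + 1) - j) ^ (2 * k)
          * ((((m : ℤ) + 1) - j) ^ 2 - ((m : ℤ) + 1) ^ 2)
      = (2 * (m : ℤ) + 2) * (2 * (m : ℤ) + 1) * S k m := by
    rw [Finset.sum_range_succ']
    have h0 : (-1 : ℤ) ^ (0:ℕ) * ((2 * (m + 1)).choose 0 : ℤ) * (((m : ℤ) + 1) - ((0:ℕ):ℤ)) ^ (2 * k)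
          * ((((m : ℤ) + 1) - ((0:ℕ):ℤ)) ^ 2 - ((m : ℤ) + 1) ^ 2) = 0 := by
      push_cast
      ring
    rw [h0, add_zero]
    have hterm : ∀ j ∈ range (2 * (m + 1)),
        (-1 : ℤ) ^ (j + 1) * ((2 * (m + 1)).choose (j + 1) : ℤ)
            * (((m : ℤ) + 1) - ((j + 1 : ℕ) : ℤ)) ^ (2 * k)
            * ((((m : ℤ) + 1) - ((j + 1 : ℕ) : ℤ)) ^ 2 - ((m : ℤ) + 1) ^ 2)
          = (2 * (m : ℤ) + 2) * (2 * (m : ℤ) + 1)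
            * ((-1 : ℤ) ^ j * ((2 * m).choose j : ℤ) * ((m : ℤ) - j) ^ (2 * k)) := by
      intro j hj
      simp only [mem_range] at hj
      have hj1 : j + 1 ≤ 2 * m + 2 := by omega
      have hcast : ((j + 1 : ℕ) : ℤ) = (j : ℤ) + 1 := by push_cast; ring
      rw [hcast]
      have hkey := choose_key m j hj1
      have hkeyz : ((j : ℤ) + 1) * ((2 * (m:ℤ) + 2) - ((j:ℤ) + 1)) * ((2 * m + 2).choose (j + 1) : ℤ)
          = (2 * (m:ℤ) + 2) * ((2 * (m:ℤ) + 1) * ((2 * m).choose j : ℤ)) := by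
        have h := congrArg (Nat.cast : ℕ → ℤ) hkey
        push_cast [Nat.cast_sub (show j ≤ 2 * m + 1 by omega), Nat.cast_sub hj1] at h
        push_cast
        linear_combination h
      have hsub : ((((m : ℤ) + 1) - (j + 1)) ^ 2 - ((m : ℤ) + 1) ^ 2)
          = -(((j:ℤ) + 1) * ((2 * (m:ℤ) + 2) - ((j:ℤ) + 1))) := by ring
      have hM : (2 * (m + 1)) = 2 * m + 2 := by ring
      rw [hM, hsub]
      have hpow : (((m : ℤ) + 1) - (j + 1)) = ((m : ℤ) - j) := by ring
      rw [hpow]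
      calc (-1 : ℤ) ^ (j + 1) * ((2 * m + 2).choose (j + 1) : ℤ) * ((m : ℤ) - j) ^ (2 * k)
            * (-(((j:ℤ) + 1) * ((2 * (m:ℤ) + 2) - ((j:ℤ) + 1))))
          = ((-1 : ℤ) ^ j * ((m : ℤ) - j) ^ (2 * k))
            * (((j : ℤ) + 1) * ((2 * (m:ℤ) + 2) - ((j:ℤ) + 1)) * ((2 * m + 2).choose (j + 1) : ℤ)) := by
            rw [pow_succ]; ring
        _ = ((-1 : ℤ) ^ j * ((m : ℤ) - j) ^ (2 * k))
            * ((2 * (m:ℤ) + 2) * ((2 * (m:ℤ) + 1) * ((2 * m).choose j : ℤ))) := by rw [hkeyz]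
        _ = _ := by ring
    rw [Finset.sum_congr rfl hterm, ← Finset.mul_sum]
    congr 1
    have : (2 * (m + 1)) = (2 * m + 1) + 1 := by ring
    rw [this, Finset.sum_range_succ, S]
    simp
  linarith [hdiff, hstep]

lemma S_eq_zero : ∀ k m : ℕ, k < m → S k m = 0 := by
  intro k
  induction k with
  | zero =>
    intro m hm
    rw [S]
    have : ∀ j ∈ range (2 * m + 1), (-1 : ℤ) ^ j * ((2 * m).choose j : ℤ) * ((m : ℤ) - j) ^ (2 * 0)
        = (-1 : ℤ) ^ j * ((2 * m).choose j : ℤ) := by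
      intro j hj; simp
    rw [Finset.sum_congr rfl this]
    obtain ⟨n, hn⟩ : ∃ n, 2 * m = n + 1 := ⟨2 * m - 1, by omega⟩
    rw [hn, Int.alternating_sum_range_choose]
    simp [show n + 1 ≠ 0 by omega]
  | succ k ih =>
    intro m hm
    obtain ⟨n, rfl⟩ : ∃ n, m = n + 1 := ⟨m - 1, by omega⟩
    rw [S_rec]
    rw [ih n (by omega), ih (n + 1) (by omega)]
    ring


noncomputable def hp (n : ℕ) : ℚ[X] := ∏ i ∈ range n, (X - C (((i : ℚ) + 1) ^ 2))

noncomputable def q (n : ℕ) : ℚ[X] := X * (hp n).comp (X ^ 2)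

lemma hp_succ (n : ℕ) : hp (n + 1) = hp n * (X - C (((n : ℚ) + 1) ^ 2)) := by
  rw [hp, hp, Finset.prod_range_succ]

lemma q_zero : q 0 = X := by simp [q, hp]

lemma q_succ (n : ℕ) : q (n + 1) = q n * (X ^ 2 - C (((n : ℚ) + 1) ^ 2)) := by
  rw [q, q, hp_succ, mul_comp, sub_comp, X_comp, C_comp, mul_assoc]

noncomputable def W (n : ℕ) : ℚ[X] := ∏ j ∈ range (2 * n + 1), (X + C ((n : ℚ) - j))

lemma W_eq_q : ∀ n, W n = q n := by
  intro n
  induction n with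
  | zero => simp [W, q_zero]
  | succ n ih =>
    have h1 : W (n + 1) = (∏ j ∈ range (2 * n + 2), (X + C (((n : ℚ) + 1) - (j + 1))))
        * (X + C ((n : ℚ) + 1)) := by
      rw [W, show 2 * (n + 1) + 1 = (2 * n + 2) + 1 by ring, Finset.prod_range_succ']
      congr 1
      · refine Finset.prod_congr rfl fun j hj => ?_
        congr 1
        push_cast
        ring
      · congr 1
        push_cast
        ring
    have h2 : (∏ j ∈ range (2 * n + 2), (X + C (((n : ℚ) + 1) - (j + 1) : ℚ)))
        = W n * (X + C ((n : ℚ) - (2 * n + 1))) := by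
      rw [show (2 * n + 2) = (2 * n + 1) + 1 by ring, Finset.prod_range_succ, W]
      congr 1
      · refine Finset.prod_congr rfl fun j hj => ?_
        congr 1
        push_cast
        ring
      · congr 1
        push_cast
        ring
    rw [h1, h2, mul_assoc, ih, q_succ]
    congr 1
    have h3 : ((n : ℚ) - (2 * n + 1)) = -((n : ℚ) + 1) := by ring
    rw [h3, map_neg, ← sub_eq_add_neg, C_pow]
    ring

noncomputable def V (n : ℕ) : ℚ[X] := ∏ j ∈ range (2 * n + 2), (X + C (((n : ℚ) + 1) - j))

lemma V_eq (n : ℕ) : V n = W n * (X + C ((n : ℚ) + 1)) := by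
  rw [V, show (2 * n + 2) = (2 * n + 1) + 1 by ring, Finset.prod_range_succ', W]
  congr 1
  · refine Finset.prod_congr rfl fun j hj => ?_
    congr 1
    push_cast
    ring
  · congr 1
    push_cast
    ring

lemma W_succ_eq (n : ℕ) : W (n + 1) = V n * (X - C ((n : ℚ) + 1)) := by
  rw [W, show 2 * (n + 1) + 1 = (2 * n + 2) + 1 by ring, Finset.prod_range_succ, V]
  congr 1
  · refine Finset.prod_congr rfl fun j hj => ?_
    congr 1
    push_cast
    ring
  · have hc : (((n + 1 : ℕ) : ℚ) - ((2 * n + 2 : ℕ) : ℚ)) = -((n : ℚ) + 1) := by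
      push_cast; ring
    rw [hc, map_neg, ← sub_eq_add_neg]

lemma W_succ_comp (n : ℕ) : (W (n + 1)).comp (X + C 1) = V n * (X + C ((n : ℚ) + 2)) := by
  rw [W, Polynomial.prod_comp]
  have hbody : ∀ j ∈ range (2 * (n + 1) + 1),
      (X + C (((n + 1 : ℕ) : ℚ) - j)).comp (X + C 1) = X + C (((n : ℚ) + 2) - j) := by
    intro j hj
    rw [add_comp, X_comp, C_comp, add_assoc, ← C_add]
    congr 2
    push_cast
    ring
  rw [Finset.prod_congr rfl hbody, show 2 * (n + 1) + 1 = (2 * n + 2) + 1 by ring,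
    Finset.prod_range_succ', V]
  congr 1
  · refine Finset.prod_congr rfl fun j hj => ?_
    congr 1
    push_cast
    ring
  · congr 1
    push_cast
    ring

lemma q_shift (n : ℕ) : (q (n + 1)).comp (X + C 1) - q (n + 1)
    = C (2 * (n : ℚ) + 3) * ((X + C ((n : ℚ) + 1)) * q n) := by
  rw [← W_eq_q, ← W_eq_q, W_succ_comp, W_succ_eq, V_eq]
  have e1 : C ((n : ℚ) + 1) = C (n : ℚ) + 1 := by simp [C_add]
  have e2 : C ((n : ℚ) + 2) = C (n : ℚ) + 2 := by simp [C_add, map_ofNat]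
  have e3 : C (2 * (n : ℚ) + 3) = 2 * C (n : ℚ) + 3 := by
    simp [C_add, C_mul, map_ofNat]
  rw [e1, e2, e3]
  ring

lemma hp_eval_zero (n : ℕ) : (hp n).eval 0 = (-1) ^ n * (n.factorial : ℚ) ^ 2 := by
  rw [hp, eval_prod]
  have : ∀ i ∈ range n, ((X : ℚ[X]) - C (((i : ℚ) + 1) ^ 2)).eval 0 = (-1) * ((i : ℚ) + 1) ^ 2 := by
    intro i hi; simp
  rw [Finset.prod_congr rfl this, Finset.prod_mul_distrib, Finset.prod_const, Finset.card_range]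
  congr 1
  rw [Finset.prod_pow]
  congr 1
  have hfac := Finset.prod_range_add_one_eq_factorial n
  calc ∏ i ∈ range n, ((i : ℚ) + 1) = ∏ i ∈ range n, ((i + 1 : ℕ) : ℚ) := by
        refine Finset.prod_congr rfl fun i _ => by push_cast; ring
    _ = ((∏ i ∈ range n, (i + 1) : ℕ) : ℚ) := by rw [Nat.cast_prod]
    _ = (n.factorial : ℚ) := by rw [hfac]

lemma q_deriv_eval_zero (n : ℕ) :
    (derivative (q n)).eval 0 = (-1) ^ n * (n.factorial : ℚ) ^ 2 := by
  rw [q, derivative_mul, derivative_X]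
  rw [eval_add, eval_mul, eval_mul, eval_X, eval_one, one_mul, eval_comp]
  simp only [eval_pow, eval_X, zero_mul, add_zero]
  rw [show ((0 : ℚ) ^ 2) = 0 by norm_num, hp_eval_zero]

noncomputable def LB : ℚ[X] →ₗ[ℚ] ℚ :=
  Polynomial.lsum (fun n => LinearMap.smulRight LinearMap.id (_root_.bernoulli n))

lemma LB_def (f : ℚ[X]) : LB f = f.sum fun n a => a * _root_.bernoulli n := by
  rfl

lemma LB_monomial (n : ℕ) (a : ℚ) : LB (monomial n a) = a * _root_.bernoulli n := by
  rw [LB_def]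
  exact Polynomial.sum_monomial_index a _ (zero_mul _)

lemma LB_X_pow (n : ℕ) : LB (X ^ n) = _root_.bernoulli n := by
  rw [← Polynomial.monomial_one_right_eq_X_pow, LB_monomial, one_mul]

lemma add_pow_expand (n : ℕ) : ((X : ℚ[X]) + C 1) ^ n
    = ∑ j ∈ range (n + 1), C ((n.choose j : ℚ)) * X ^ j := by
  rw [add_pow]
  refine Finset.sum_congr rfl fun j hj => ?_
  rw [C_1, one_pow, mul_one, C_eq_natCast]
  exact mul_comm _ _

lemma LB_shift (f : ℚ[X]) : LB (f.comp (X + C 1)) = LB f + (derivative f).eval 0 := by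
  induction f using Polynomial.induction_on' with
  | add p r hp hr =>
    rw [add_comp, map_add, hp, hr, derivative_add, eval_add, map_add]
    ring
  | monomial n a =>
    rw [show (monomial n a : ℚ[X]) = C a * X ^ n from (C_mul_X_pow_eq_monomial).symm]
    rw [mul_comp, C_comp, pow_comp, X_comp, add_pow_expand, Finset.mul_sum, map_sum]
    have hterm : ∀ j ∈ range (n + 1),
        LB (C a * (C ((n.choose j : ℚ)) * X ^ j)) = a * ((n.choose j : ℚ) * _root_.bernoulli j) := by
      intro j hj
      rw [← mul_assoc, ← C_mul, C_mul_X_pow_eq_monomial, LB_monomial, mul_assoc]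
    rw [Finset.sum_congr rfl hterm, ← Finset.mul_sum, Finset.sum_range_succ, _root_.sum_bernoulli,
      Nat.choose_self, C_mul_X_pow_eq_monomial, LB_monomial, derivative_monomial, eval_monomial]
    rcases n with _ | n
    · norm_num
    rcases n with _ | n
    · norm_num [_root_.bernoulli_one]
      ring
    · have h1 : (n + 1 + 1 : ℕ) ≠ 1 := by omega
      rw [if_neg h1]
      have h2 : ((0 : ℚ) ^ (n + 1 + 1 - 1)) = 0 := by
        rw [zero_pow]; omega
      rw [h2]
      push_cast
      ring

lemma LB_odd (H : ℚ[X]) : LB (X * H.comp (X ^ 2)) = -(1/2) * H.eval 0 := by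
  induction H using Polynomial.induction_on' with
  | add p r hp hr =>
    rw [add_comp, mul_add, map_add, hp, hr, eval_add]
    ring
  | monomial n a =>
    have hmon : (X : ℚ[X]) * ((monomial n a).comp (X ^ 2)) = monomial (2 * n + 1) a := by
      rw [show (monomial n a : ℚ[X]) = C a * X ^ n from (C_mul_X_pow_eq_monomial).symm,
        mul_comp, C_comp, pow_comp, X_comp,
        show (monomial (2*n+1) a : ℚ[X]) = C a * X ^ (2*n+1) from (C_mul_X_pow_eq_monomial).symm,
        ← pow_mul]
      ring
    rw [hmon, LB_monomial, eval_monomial]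
    rcases n with _ | n
    · norm_num [_root_.bernoulli_one]
      ring
    · have hodd : _root_.bernoulli (2 * (n + 1) + 1) = 0 := by
        rw [bernoulli_eq_bernoulli'_of_ne_one (by omega)]
        exact bernoulli'_eq_zero_of_odd ⟨n + 1, by ring⟩ (by omega)
      rw [hodd, zero_pow (by omega : n + 1 ≠ 0)]
      ring

lemma LB_q (n : ℕ) : LB (q n) = -(1/2) * ((-1) ^ n * (n.factorial : ℚ) ^ 2) := by
  rw [q, LB_odd, hp_eval_zero]

lemma LB_Xq (n : ℕ) : LB (X * q n)
    = (-1) ^ n * ((n + 1).factorial : ℚ) * (n.factorial : ℚ) / (2 * (2 * (n : ℚ) + 3)) := by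
  have hs := congrArg LB (q_shift n)
  rw [map_sub, LB_shift, q_deriv_eval_zero] at hs
  rw [show (C (2 * (n:ℚ) + 3) * ((X + C ((n:ℚ)+1)) * q n))
      = (2 * (n:ℚ) + 3) • ((X + C ((n:ℚ)+1)) * q n) from by rw [Polynomial.smul_eq_C_mul],
    map_smul] at hs
  rw [add_mul, map_add] at hs
  rw [show (C ((n:ℚ)+1) * q n) = ((n:ℚ)+1) • q n from by rw [Polynomial.smul_eq_C_mul],
    map_smul] at hs
  simp only [smul_eq_mul, add_sub_cancel_left] at hs
  rw [LB_q n] at hs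
  have hfac : (((n+1).factorial : ℚ)) = ((n:ℚ)+1) * (n.factorial : ℚ) := by
    rw [Nat.factorial_succ]; push_cast; ring
  have h3 : (2 * (n:ℚ) + 3) ≠ 0 := by positivity
  have hpow : ((-1:ℚ)) ^ (n+1) = -((-1:ℚ))^n := by rw [pow_succ]; ring
  rw [hfac] at hs ⊢
  field_simp at hs ⊢
  linear_combination -hs

noncomputable def γ (k m : ℕ) : ℚ := (S k m : ℚ) / ((2 * m).factorial : ℚ)

lemma S_zero_right (k : ℕ) (hk : 1 ≤ k) : S k 0 = 0 := by
  rw [S]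
  simp only [mul_zero, zero_add, Finset.sum_range_one]
  simp [zero_pow (by omega : 2 * k ≠ 0)]

lemma gamma_zero (k : ℕ) (hk : 1 ≤ k) : γ k 0 = 0 := by
  rw [γ, S_zero_right k hk]; norm_num

lemma gamma_top (k m : ℕ) (h : k < m) : γ k m = 0 := by
  rw [γ, S_eq_zero k m h]; norm_num

lemma gamma_rec (k m : ℕ) :
    γ (k + 1) (m + 1) = γ k m + ((m : ℚ) + 1) ^ 2 * γ k (m + 1) := by
  have hfac : ((2 * (m + 1)).factorial : ℚ)
      = (2 * (m : ℚ) + 2) * ((2 * (m : ℚ) + 1) * ((2 * m).factorial : ℚ)) := by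
    have : 2 * (m + 1) = (2 * m + 1) + 1 := by ring
    rw [this, Nat.factorial_succ, Nat.factorial_succ]
    push_cast
    ring
  have h1 : ((2 * m).factorial : ℚ) ≠ 0 := Nat.cast_ne_zero.mpr (Nat.factorial_ne_zero _)
  have h2 : (2 * (m : ℚ) + 2) ≠ 0 := by positivity
  have h3 : (2 * (m : ℚ) + 1) ≠ 0 := by positivity
  have hrec := S_rec k m
  have hrecq : (S (k + 1) (m + 1) : ℚ)
      = (2 * (m : ℚ) + 2) * (2 * (m : ℚ) + 1) * (S k m : ℚ)
        + ((m : ℚ) + 1) ^ 2 * (S k (m + 1) : ℚ) := by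
    have := congrArg (Int.cast : ℤ → ℚ) hrec
    push_cast at this
    convert this using 2 <;> push_cast <;> ring
  rw [γ, γ, γ, hrecq, hfac]
  field_simp

lemma S_one_one : S 1 1 = 2 := by
  rw [S]
  rw [show 2 * 1 + 1 = 3 by norm_num]
  rw [Finset.sum_range_succ, Finset.sum_range_succ, Finset.sum_range_one]
  norm_num

lemma expansion (k : ℕ) (hk : 1 ≤ k) : ∀ K, k ≤ K →
    (X : ℚ[X]) ^ (2 * k) = ∑ n ∈ range K, C (γ k (n + 1)) * (X * q n) := by
  induction k, hk using Nat.le_induction with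
  | base =>
    intro K hK
    have hterm : ∀ b ∈ range K, b ≠ 0 → C (γ 1 (b + 1)) * (X * q b) = 0 := by
      intro b hb hb0
      rw [gamma_top 1 (b + 1) (by omega), map_zero, zero_mul]
    rw [Finset.sum_eq_single_of_mem 0 (Finset.mem_range.mpr (by omega)) hterm]
    rw [q_zero]
    have : γ 1 1 = 1 := by
      rw [γ, S_one_one]
      norm_num
    rw [this, map_one, one_mul]
    ring
  | succ k hk ih =>
    intro K hK
    have hkK : k ≤ K := by omega
    have h2 : (X : ℚ[X]) ^ (2 * (k + 1)) = X ^ (2 * k) * X ^ 2 := by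
      rw [← pow_add, show 2 * (k + 1) = 2 * k + 2 from by ring]
    rw [h2, ih K hkK, Finset.sum_mul]
    have hterm : ∀ n ∈ range K,
        C (γ k (n + 1)) * (X * q n) * X ^ 2
          = C (γ k (n + 1)) * (X * q (n + 1))
            + C (((n : ℚ) + 1) ^ 2 * γ k (n + 1)) * (X * q n) := by
      intro n hn
      rw [q_succ, C_mul]
      ring
    rw [Finset.sum_congr rfl hterm, Finset.sum_add_distrib]
    have hshift : ∑ n ∈ range K, C (γ k (n + 1)) * (X * q (n + 1))
        = ∑ n ∈ range K, C (γ k n) * (X * q n) := by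
      have h0 : C (γ k 0) * (X * q 0) = 0 := by
        rw [gamma_zero k hk, map_zero, zero_mul]
      have hK0 : C (γ k K) * (X * q K) = 0 := by
        rw [gamma_top k K (by omega), map_zero, zero_mul]
      have := Finset.sum_range_succ' (fun n => C (γ k n) * (X * q n)) K
      rw [h0, add_zero] at this
      rw [← this, Finset.sum_range_succ, hK0, add_zero]
    rw [hshift, ← Finset.sum_add_distrib]
    refine Finset.sum_congr rfl fun n hn => ?_
    rw [gamma_rec k n, map_add]
    ring

theorem stmt_17' (k : ℕ) (hk : 1 ≤ k) :
    _root_.bernoulli (2 * k) =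
      ∑ m ∈ Finset.Icc 1 k,
        (-1 : ℚ) ^ (m - 1) *
          ((Nat.factorial m : ℚ) * (Nat.factorial (m - 1) : ℚ) /
            (Nat.factorial (2 * m + 1) : ℚ)) * (R k m : ℚ) := by
  rw [← LB_X_pow (2 * k), expansion k hk k le_rfl, map_sum]
  refine Finset.sum_nbij' (i := fun n => n + 1) (j := fun m => m - 1) ?_ ?_ ?_ ?_ ?_
  · intro a ha; simp only [Finset.mem_range] at ha; simp only [Finset.mem_Icc]; omega
  · intro a ha; simp only [Finset.mem_Icc] at ha; simp only [Finset.mem_range]; omega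
  · intro a ha; simp only [Finset.mem_range] at ha; omega
  · intro a ha; simp only [Finset.mem_Icc] at ha; omega
  · intro n hn
    have hLB : LB (C (γ k (n + 1)) * (X * q n)) = γ k (n + 1) * LB (X * q n) := by
      rw [← Polynomial.smul_eq_C_mul, map_smul, smul_eq_mul]
    rw [hLB, LB_Xq]
    have hS : ((S k (n + 1) : ℤ) : ℚ) = 2 * ((R k (n + 1) : ℤ) : ℚ) := by
      rw [S_eq_two_mul_R k (n + 1) hk]; push_cast; ring
    rw [γ, hS]
    rw [show (n + 1) - 1 = n from by omega]
    have hfac3 : ((2 * (n + 1) + 1).factorial : ℚ)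
        = (2 * (n : ℚ) + 3) * ((2 * (n + 1)).factorial : ℚ) := by
      rw [Nat.factorial_succ]
      push_cast
      ring
    rw [hfac3]
    have h1 : ((2 * (n + 1)).factorial : ℚ) ≠ 0 := Nat.cast_ne_zero.mpr (Nat.factorial_ne_zero _)
    have h2 : (2 * (n : ℚ) + 3) ≠ 0 := by positivity
    have hfac : (((n + 1).factorial : ℚ)) = ((n : ℚ) + 1) * (n.factorial : ℚ) := by
      rw [Nat.factorial_succ]; push_cast; ring
    field_simp

end AuxiliaryDevelopment

theorem stmt_17 (k : ℕ) (hk : 1 ≤ k) :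
    bernoulli (2 * k) =
      ∑ m ∈ Finset.Icc 1 k,
        (-1 : ℚ) ^ (m - 1) *
          ((Nat.factorial m : ℚ) * (Nat.factorial (m - 1) : ℚ) /
            (Nat.factorial (2 * m + 1) : ℚ)) * (R k m : ℚ) := stmt_17' k hk
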